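/- For M = 1 (four resources at locations 0,1,2,3: golds at 0 on line 1 and at 1 on line 0; mines at 2 on line 1 and at 3 on line 0) with 0 < ρ < −μ < 1 and both players having capability 1 (constant strategies only): the strategy profiles (f_A ≡ 0, f_B ≡ 1) and (f_A ≡ 1, f_B ≡ 0) are pure Nash equilibria, and the profiles where both players play the same constant are not Nash equilibria. -/

import Mathlib

open Finset

/-- Number of segments of a strategy `f` on locations `0, ..., 4*M-1`. -/
def seg (M : ℕ) (f : ℕ → ℕ) : ℕ :=
  ((Finset.range (4*M - 1)).filter (fun i => f i ≠ f (i+1))).card + 1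

/-- Upward discontinuity points of `f`. -/
def udp (M : ℕ) (f : ℕ → ℕ) : Finset ℕ :=
  (Finset.range (4*M - 1)).filter (fun i => f i = 0 ∧ f (i+1) = 1)

/-- Downward discontinuity points of `f`. -/
def ddp (M : ℕ) (f : ℕ → ℕ) : Finset ℕ :=
  (Finset.range (4*M - 1)).filter (fun i => f i = 1 ∧ f (i+1) = 0)

/-- Gold sites covered by `f`: locations `i` with `i % 4 ≤ 1` and `f i = (i+1) % 2`. -/
def goldCov (M : ℕ) (f : ℕ → ℕ) : Finset ℕ :=
  (Finset.range (4*M)).filter (fun i => i % 4 ≤ 1 ∧ f i = (i+1) % 2)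

/-- Mine sites covered by `f`: locations `i` with `i % 4 ≥ 2` and `f i = (i+1) % 2`. -/
def mineCov (M : ℕ) (f : ℕ → ℕ) : Finset ℕ :=
  (Finset.range (4*M)).filter (fun i => 2 ≤ i % 4 ∧ f i = (i+1) % 2)

/-- Payoff of a player playing `fA` against an opponent playing `fB`:
`1` for each gold site covered exclusively, `ρ` for each shared gold site,
`μ` for each covered mine site. -/
def pay (M : ℕ) (ρ μ : ℝ) (fA fB : ℕ → ℕ) : ℝ :=
  ((goldCov M fA \ goldCov M fB).card : ℝ)
    + ρ * ((goldCov M fA ∩ goldCov M fB).card : ℝ)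
    + μ * ((mineCov M fA).card : ℝ)

/-- The explicit perfect-cover strategy. -/

lemma g0 : goldCov 1 (fun _ => 0) = {1} := by decide
lemma m0 : mineCov 1 (fun _ => 0) = {3} := by decide
lemma g1 : goldCov 1 (fun _ => 1) = {0} := by decide
lemma m1 : mineCov 1 (fun _ => 1) = {2} := by decide

lemma pay00 (ρ μ : ℝ) : pay 1 ρ μ (fun _ => 0) (fun _ => 0) = ρ + μ := by
  simp [pay, g0, m0]
lemma pay01 (ρ μ : ℝ) : pay 1 ρ μ (fun _ => 0) (fun _ => 1) = 1 + μ := by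
  simp [pay, g0, m0, g1]
  decide
lemma pay10 (ρ μ : ℝ) : pay 1 ρ μ (fun _ => 1) (fun _ => 0) = 1 + μ := by
  simp [pay, g0, g1, m1]
  decide
lemma pay11 (ρ μ : ℝ) : pay 1 ρ μ (fun _ => 1) (fun _ => 1) = ρ + μ := by
  simp [pay, g1, m1]


theorem M1_capability1_equilibria (ρ μ : ℝ) (hρ : 0 < ρ) (hρμ : ρ < -μ) (hμ : -μ < 1) :
    -- (const 0, const 1) is a pure Nash equilibrium among constant strategies
    ((∀ c : ℕ, c ≤ 1 →
        pay 1 ρ μ (fun _ => c) (fun _ => 1) ≤ pay 1 ρ μ (fun _ => 0) (fun _ => 1)) ∧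
     (∀ c : ℕ, c ≤ 1 →
        pay 1 ρ μ (fun _ => c) (fun _ => 0) ≤ pay 1 ρ μ (fun _ => 1) (fun _ => 0))) ∧
    -- (const 1, const 0) is a pure Nash equilibrium among constant strategies
    ((∀ c : ℕ, c ≤ 1 →
        pay 1 ρ μ (fun _ => c) (fun _ => 0) ≤ pay 1 ρ μ (fun _ => 1) (fun _ => 0)) ∧
     (∀ c : ℕ, c ≤ 1 →
        pay 1 ρ μ (fun _ => c) (fun _ => 1) ≤ pay 1 ρ μ (fun _ => 0) (fun _ => 1))) ∧
    -- (const 0, const 0) is not a Nash equilibrium: some player improves by deviating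
    (∃ c : ℕ, c ≤ 1 ∧
        pay 1 ρ μ (fun _ => 0) (fun _ => 0) < pay 1 ρ μ (fun _ => c) (fun _ => 0)) ∧
    -- (const 1, const 1) is not a Nash equilibrium
    (∃ c : ℕ, c ≤ 1 ∧
        pay 1 ρ μ (fun _ => 1) (fun _ => 1) < pay 1 ρ μ (fun _ => c) (fun _ => 1)) := by
  have hρ1 : ρ < 1 := lt_trans hρμ hμ
  have key : ∀ c : ℕ, c ≤ 1 → (fun _ : ℕ => c) = (fun _ : ℕ => 0) ∨ (fun _ : ℕ => c) = (fun _ : ℕ => 1) := by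
    intro c hc
    interval_cases c
    · exact Or.inl rfl
    · exact Or.inr rfl
  refine ⟨⟨?_, ?_⟩, ⟨?_, ?_⟩, ⟨1, le_refl 1, ?_⟩, ⟨0, Nat.zero_le 1, ?_⟩⟩ <;>
    first
    | (intro c hc; rcases key c hc with h | h <;> rw [h] <;>
        simp only [pay00, pay01, pay10, pay11] <;> linarith)
    | (simp only [pay00, pay01, pay10, pay11]; linarith)
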